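/- A convex body K in ℝ^n is in Behrend position if and only if the normalized difference body (1/D(K))·(K − K) is in Löwner position, where K − K = {x − y : x, y ∈ K}. -/

import Mathlib

open MeasureTheory Metric Set Pointwise
open scoped RealInnerProductSpace

/-- A convex body: a compact convex set with nonempty interior. -/
def IsConvexBody {n : ℕ} (K : Set (EuclideanSpace ℝ (Fin n))) : Prop :=
  IsCompact K ∧ Convex ℝ K ∧ (interior K).Nonempty

/-- The isodiametric quotient `iq(K) = vol(K) / D(K)^n`. -/
noncomputable def iq {n : ℕ} (K : Set (EuclideanSpace ℝ (Fin n))) : ℝ :=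
  (volume K).toReal / Metric.diam K ^ n

/-- `K` is in Behrend position if `iq(K)` is maximal among invertible linear images of `K`. -/
def InBehrendPosition {n : ℕ} (K : Set (EuclideanSpace ℝ (Fin n))) : Prop :=
  ∀ A : EuclideanSpace ℝ (Fin n) ≃ₗ[ℝ] EuclideanSpace ℝ (Fin n), iq (A '' K) ≤ iq K

/-- `K` is in Löwner position if `K ⊆ B₂ⁿ` and every ellipsoid (affine image of the unit
ball) containing `K` has volume at least that of the unit ball. -/
def InLownerPosition {n : ℕ} (K : Set (EuclideanSpace ℝ (Fin n))) : Prop :=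
  K ⊆ closedBall 0 1 ∧
  ∀ (A : EuclideanSpace ℝ (Fin n) ≃ₗ[ℝ] EuclideanSpace ℝ (Fin n)) (t : EuclideanSpace ℝ (Fin n)),
    K ⊆ (fun x => A x + t) '' closedBall 0 1 →
    volume (closedBall (0 : EuclideanSpace ℝ (Fin n)) 1) ≤
      volume ((fun x => A x + t) '' closedBall 0 1)

private lemma diam_pos_aux {n : ℕ} (hn : 0 < n) {K : Set (EuclideanSpace ℝ (Fin n))}
    (hb : Bornology.IsBounded K) (hint : (interior K).Nonempty) : 0 < Metric.diam K := by
  obtain ⟨x, hx⟩ := hint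
  obtain ⟨ε, hε, hball⟩ := Metric.isOpen_iff.1 isOpen_interior x hx
  set e : EuclideanSpace ℝ (Fin n) := EuclideanSpace.single ⟨0, hn⟩ (ε/2) with he
  have hne : ‖e‖ = ε/2 := by
    simp [he, EuclideanSpace.norm_single, abs_of_pos hε]
  have hy : x + e ∈ K := interior_subset (hball (by
    simp only [Metric.mem_ball, dist_eq_norm, add_sub_cancel_left, hne]; linarith))
  have hxK : x ∈ K := interior_subset hx
  have h2 := Metric.dist_le_diam_of_mem hb hy hxK
  have hd : dist (x + e) x = ε/2 := by simp [dist_eq_norm, hne]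
  linarith

private lemma vol_image_aux {n : ℕ} (A : EuclideanSpace ℝ (Fin n) ≃ₗ[ℝ] EuclideanSpace ℝ (Fin n))
    (s : Set (EuclideanSpace ℝ (Fin n))) :
    volume (⇑A '' s) = ENNReal.ofReal
      |LinearMap.det (A : EuclideanSpace ℝ (Fin n) →ₗ[ℝ] EuclideanSpace ℝ (Fin n))| * volume s :=
  MeasureTheory.Measure.addHaar_image_linearMap volume _ s

private lemma interior_image_aux {n : ℕ} {K : Set (EuclideanSpace ℝ (Fin n))}
    (hint : (interior K).Nonempty) (A : EuclideanSpace ℝ (Fin n) ≃ₗ[ℝ] EuclideanSpace ℝ (Fin n)) :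
    (interior (⇑A '' K)).Nonempty := by
  have h := A.toContinuousLinearEquiv.toHomeomorph.image_interior K
  rw [show ⇑A.toContinuousLinearEquiv.toHomeomorph = ⇑A from rfl] at h
  rw [← h]
  exact hint.image _

private lemma cont_aux {n : ℕ} (A : EuclideanSpace ℝ (Fin n) ≃ₗ[ℝ] EuclideanSpace ℝ (Fin n)) :
    Continuous ⇑A :=
  (A : EuclideanSpace ℝ (Fin n) →ₗ[ℝ] EuclideanSpace ℝ (Fin n)).continuous_of_finiteDimensional

set_option maxHeartbeats 1000000 in
theorem behrend_iff_normalized_difference_lowner' {n : ℕ}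
    (K : Set (EuclideanSpace ℝ (Fin n))) (hK : IsCompact K ∧ Convex ℝ K ∧ (interior K).Nonempty) :
    (∀ A : EuclideanSpace ℝ (Fin n) ≃ₗ[ℝ] EuclideanSpace ℝ (Fin n),
      (volume (A '' K)).toReal / Metric.diam (A '' K) ^ n ≤ (volume K).toReal / Metric.diam K ^ n)
    ↔ (((Metric.diam K)⁻¹ • (K - K)) ⊆ closedBall 0 1 ∧
  ∀ (A : EuclideanSpace ℝ (Fin n) ≃ₗ[ℝ] EuclideanSpace ℝ (Fin n)) (t : EuclideanSpace ℝ (Fin n)),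
    ((Metric.diam K)⁻¹ • (K - K)) ⊆ (fun x => A x + t) '' closedBall 0 1 →
    volume (closedBall (0 : EuclideanSpace ℝ (Fin n)) 1) ≤
      volume ((fun x => A x + t) '' closedBall 0 1)) := by
  obtain ⟨hKc, hKconv, hKint⟩ := hK
  rcases Nat.eq_zero_or_pos n with hn | hn
  · subst hn
    haveI : Subsingleton (EuclideanSpace ℝ (Fin 0)) :=
      ⟨fun a b => PiLp.ext fun i => i.elim0⟩
    constructor
    · intro _
      constructor
      · intro z _
        rw [mem_closedBall]
        rw [Subsingleton.elim z 0]
        simp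
      · intro A t _
        have himg : (fun x : EuclideanSpace ℝ (Fin 0) => A x + t) '' closedBall 0 1
            = closedBall 0 1 := by
          rw [show (fun x : EuclideanSpace ℝ (Fin 0) => A x + t) = id from
            funext fun x => Subsingleton.elim _ _, Set.image_id]
        rw [himg]
    · intro _ A
      rw [show ⇑A = id from funext fun x => Subsingleton.elim _ _, Set.image_id]
  set D := Metric.diam K with hDdef
  have hDpos : 0 < D := diam_pos_aux hn hKc.isBounded hKint
  have hv : 0 < (volume K).toReal :=
    ENNReal.toReal_pos ((isOpen_interior.measure_pos volume hKint).trans_le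
      (measure_mono interior_subset)).ne' hKc.measure_lt_top.ne
  have hsym : ∀ z ∈ D⁻¹ • (K - K), -z ∈ D⁻¹ • (K - K) := by
    intro z hz
    obtain ⟨w, hw, rfl⟩ := Set.mem_smul_set.mp hz
    obtain ⟨x, hx, y, hy, rfl⟩ := Set.mem_sub.mp hw
    rw [← smul_neg, neg_sub]
    exact Set.smul_mem_smul_set (Set.sub_mem_sub hy hx)
  constructor
  · -- Behrend → Löwner
    intro hB
    constructor
    · rintro z hz
      obtain ⟨w, hw, rfl⟩ := Set.mem_smul_set.mp hz
      obtain ⟨x, hx, y, hy, rfl⟩ := Set.mem_sub.mp hw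
      rw [mem_closedBall_zero_iff, norm_smul, Real.norm_eq_abs,
        abs_of_pos (inv_pos.2 hDpos)]
      have hxy : ‖x - y‖ ≤ D := by
        rw [← dist_eq_norm]; exact Metric.dist_le_diam_of_mem hKc.isBounded hx hy
      calc D⁻¹ * ‖x - y‖ ≤ D⁻¹ * D := by gcongr
        _ = 1 := inv_mul_cancel₀ hDpos.ne'
    · intro A t hsub
      -- key : preimages of points of L under A are small
      have key : ∀ z ∈ D⁻¹ • (K - K), ‖A.symm z‖ ≤ 1 := by
        intro z hz
        obtain ⟨u, hu, hu2⟩ := hsub hz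
        obtain ⟨w, hw, hw2⟩ := hsub (hsym z hz)
        have hAu : A u = z - t := eq_sub_of_add_eq hu2
        have hAw : A w = -z - t := eq_sub_of_add_eq hw2
        have hz_eq : z = A ((2⁻¹ : ℝ) • (u - w)) := by
          rw [_root_.map_smul, map_sub, hAu, hAw]
          rw [show z - t - (-z - t) = z + z by abel, ← two_smul ℝ z, smul_smul]
          norm_num
        have hsymm_eq : A.symm z = (2⁻¹ : ℝ) • (u - w) := by
          rw [hz_eq, A.symm_apply_apply]
        rw [hsymm_eq, norm_smul, Real.norm_eq_abs]
        have hu' : ‖u‖ ≤ 1 := mem_closedBall_zero_iff.mp hu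
        have hw' : ‖w‖ ≤ 1 := mem_closedBall_zero_iff.mp hw
        have := norm_sub_le u w
        rw [abs_of_pos (by norm_num : (0:ℝ) < 2⁻¹)]
        nlinarith
      have hdiam : Metric.diam (⇑A.symm '' K) ≤ D := by
        apply Metric.diam_le_of_forall_dist_le hDpos.le
        rintro p ⟨x, hx, rfl⟩ q ⟨y, hy, rfl⟩
        have hzL : D⁻¹ • (x - y) ∈ D⁻¹ • (K - K) :=
          Set.smul_mem_smul_set (Set.sub_mem_sub hx hy)
        have hk := key _ hzL
        rw [show A.symm (D⁻¹ • (x - y)) = D⁻¹ • (A.symm x - A.symm y) by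
          rw [_root_.map_smul, map_sub], norm_smul, Real.norm_eq_abs,
          abs_of_pos (inv_pos.2 hDpos)] at hk
        rw [dist_eq_norm]
        calc ‖A.symm x - A.symm y‖ = D * (D⁻¹ * ‖A.symm x - A.symm y‖) := by
              field_simp
          _ ≤ D * 1 := by gcongr
          _ = D := mul_one D
      -- apply Behrend to A.symm
      have hAc : IsCompact (⇑A.symm '' K) := hKc.image (cont_aux A.symm)
      have hdS : 0 < Metric.diam (⇑A.symm '' K) :=
        diam_pos_aux hn hAc.isBounded (interior_image_aux hKint A.symm)
      have hB' := hB A.symm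
      rw [vol_image_aux, ENNReal.toReal_mul, ENNReal.toReal_ofReal (abs_nonneg _),
        div_le_div_iff₀ (pow_pos hdS n) (pow_pos hDpos n)] at hB'
      have hpow : Metric.diam (⇑A.symm '' K) ^ n ≤ D ^ n :=
        pow_le_pow_left₀ hdS.le hdiam n
      have hdet_le : |LinearMap.det
          (A.symm : EuclideanSpace ℝ (Fin n) →ₗ[ℝ] EuclideanSpace ℝ (Fin n))| ≤ 1 := by
        nlinarith [mul_le_mul_of_nonneg_left hpow hv.le,
          mul_pos hv (pow_pos hDpos n)]
      have hdet_ge : (1:ℝ) ≤ |LinearMap.det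
          (A : EuclideanSpace ℝ (Fin n) →ₗ[ℝ] EuclideanSpace ℝ (Fin n))| := by
        rw [LinearEquiv.det_coe_symm, abs_inv] at hdet_le
        have hpos : 0 < |LinearMap.det
            (A : EuclideanSpace ℝ (Fin n) →ₗ[ℝ] EuclideanSpace ℝ (Fin n))| :=
          abs_pos.mpr A.isUnit_det'.ne_zero
        have := mul_le_mul_of_nonneg_left hdet_le hpos.le
        rw [mul_inv_cancel₀ hpos.ne', mul_one] at this
        exact this
      -- compute the volume of the ellipsoid
      have himg_eq : (fun x => A x + t) '' closedBall 0 1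
          = t +ᵥ (⇑A '' closedBall 0 1) := by
        ext z
        simp only [Set.mem_image, Set.mem_vadd_set]
        constructor
        · rintro ⟨x, hx, rfl⟩; exact ⟨A x, ⟨x, hx, rfl⟩, by simp [add_comm]⟩
        · rintro ⟨y, ⟨x, hx, rfl⟩, rfl⟩; exact ⟨x, hx, by simp [add_comm]⟩
      rw [himg_eq, measure_vadd, vol_image_aux]
      exact le_mul_of_one_le_left zero_le (ENNReal.one_le_ofReal.mpr hdet_ge)
  · -- Löwner → Behrend
    rintro ⟨hsub, hvol⟩ A
    have hAc : IsCompact (⇑A '' K) := hKc.image (cont_aux A)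
    set d := Metric.diam (⇑A '' K) with hddef
    have hd : 0 < d := diam_pos_aux hn hAc.isBounded (interior_image_aux hKint A)
    set c := D / d with hcdef
    have hcpos : 0 < c := div_pos hDpos hd
    set E := A.trans (LinearEquiv.smulOfNeZero ℝ (EuclideanSpace ℝ (Fin n)) c hcpos.ne')
      with hEdef
    have hEapp : ∀ x, E x = c • A x := fun x => rfl
    have hEsub : (D⁻¹ • (K - K)) ⊆ (fun x => E.symm x + 0) '' closedBall 0 1 := by
      rintro z hz
      obtain ⟨w, hw, rfl⟩ := Set.mem_smul_set.mp hz
      obtain ⟨x, hx, y, hy, rfl⟩ := Set.mem_sub.mp hw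
      refine ⟨E (D⁻¹ • (x - y)), ?_, by simp⟩
      rw [mem_closedBall_zero_iff, hEapp, _root_.map_smul, map_sub, smul_smul, norm_smul,
        Real.norm_eq_abs, abs_of_pos (by positivity : (0:ℝ) < c * D⁻¹)]
      have h1 : ‖A x - A y‖ ≤ d := by
        rw [← dist_eq_norm]
        exact Metric.dist_le_diam_of_mem hAc.isBounded ⟨x, hx, rfl⟩ ⟨y, hy, rfl⟩
      calc c * D⁻¹ * ‖A x - A y‖ ≤ c * D⁻¹ * d := by gcongr
        _ = 1 := by rw [hcdef]; field_simp
    have h2 := hvol E.symm 0 hEsub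
    rw [show (fun x => E.symm x + 0) = ⇑E.symm from funext fun x => add_zero _] at h2
    rw [vol_image_aux] at h2
    have hvb0 : volume (closedBall (0:EuclideanSpace ℝ (Fin n)) 1) ≠ 0 :=
      (measure_closedBall_pos volume _ one_pos).ne'
    have hvbt : volume (closedBall (0:EuclideanSpace ℝ (Fin n)) 1) ≠ ⊤ :=
      measure_closedBall_lt_top.ne
    have h3 : (1:ENNReal) ≤ ENNReal.ofReal |LinearMap.det
        (E.symm : EuclideanSpace ℝ (Fin n) →ₗ[ℝ] EuclideanSpace ℝ (Fin n))| := by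
      rw [← ENNReal.mul_le_mul_iff_left hvb0 hvbt, one_mul]
      exact h2
    have h4 : (1:ℝ) ≤ |LinearMap.det
        (E.symm : EuclideanSpace ℝ (Fin n) →ₗ[ℝ] EuclideanSpace ℝ (Fin n))| :=
      ENNReal.one_le_ofReal.mp h3
    have hdetE : LinearMap.det (E : EuclideanSpace ℝ (Fin n) →ₗ[ℝ] EuclideanSpace ℝ (Fin n))
        = c ^ n * LinearMap.det (A : EuclideanSpace ℝ (Fin n) →ₗ[ℝ] EuclideanSpace ℝ (Fin n)) := by
      have hElin : (E : EuclideanSpace ℝ (Fin n) →ₗ[ℝ] EuclideanSpace ℝ (Fin n))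
          = c • (A : EuclideanSpace ℝ (Fin n) →ₗ[ℝ] EuclideanSpace ℝ (Fin n)) :=
        LinearMap.ext fun x => rfl
      rw [hElin, LinearMap.det_smul, finrank_euclideanSpace_fin]
    have hdetA_pos : 0 < |LinearMap.det
        (A : EuclideanSpace ℝ (Fin n) →ₗ[ℝ] EuclideanSpace ℝ (Fin n))| :=
      abs_pos.mpr A.isUnit_det'.ne_zero
    have hdetE_pos : 0 < |LinearMap.det
        (E : EuclideanSpace ℝ (Fin n) →ₗ[ℝ] EuclideanSpace ℝ (Fin n))| :=
      abs_pos.mpr E.isUnit_det'.ne_zero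
    have h5 : |LinearMap.det
        (E : EuclideanSpace ℝ (Fin n) →ₗ[ℝ] EuclideanSpace ℝ (Fin n))| ≤ 1 := by
      rw [LinearEquiv.det_coe_symm, abs_inv] at h4
      nlinarith [mul_le_mul_of_nonneg_left h4 hdetE_pos.le,
        mul_inv_cancel₀ hdetE_pos.ne']
    have h6 : c ^ n * |LinearMap.det
        (A : EuclideanSpace ℝ (Fin n) →ₗ[ℝ] EuclideanSpace ℝ (Fin n))| ≤ 1 := by
      rw [hdetE, abs_mul, abs_pow, abs_of_pos hcpos] at h5
      exact h5
    have hcd : c ^ n * d ^ n = D ^ n := by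
      rw [← mul_pow, hcdef]; field_simp
    have key : |LinearMap.det
        (A : EuclideanSpace ℝ (Fin n) →ₗ[ℝ] EuclideanSpace ℝ (Fin n))| * D ^ n ≤ d ^ n := by
      nlinarith [mul_le_mul_of_nonneg_right h6 (pow_pos hd n).le]
    rw [vol_image_aux, ENNReal.toReal_mul, ENNReal.toReal_ofReal (abs_nonneg _),
      div_le_div_iff₀ (pow_pos hd n) (pow_pos hDpos n)]
    have h7 := mul_le_mul_of_nonneg_left key hv.le
    clear hvol hsub hsym hEsub h2 h3 h4 h5 h6 hEapp hEdef hdetE key hcd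
    nlinarith [h7]

/-- A convex body is in Behrend position iff its normalized difference body
`(1/D(K))·(K - K)` is in Löwner position. -/
theorem behrend_iff_normalized_difference_lowner {n : ℕ}
    (K : Set (EuclideanSpace ℝ (Fin n))) (hK : IsConvexBody K) :
    InBehrendPosition K ↔ InLownerPosition ((Metric.diam K)⁻¹ • (K - K)) := by
  exact behrend_iff_normalized_difference_lowner' K hK
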